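/- arXiv:2103.03193 — 4 statements merged into one kernel-verified Lean document; each statement's English description precedes it below -/
import Mathlib

section
/- Let G be a bipartite graph with vertex sets I, J and nonnegative edge weights w. Let M* be a maximum-weight matching of G. If I' ⊆ I is chosen so that each i ∈ I belongs to I' with probability c1, and independently J' ⊆ J is chosen so that each j ∈ J belongs to J' with probability c2, then the expected weight of a maximum-weight matching of the induced subgraph on (I', J') is at least c1·c2 times the weight of M*. -/
set_option maxHeartbeats 1000000


def IsMatching {I J : Type} (M : Finset (I × J)) : Prop :=
  ∀ e ∈ M, ∀ e' ∈ M, e ≠ e' → e.1 ≠ e'.1 ∧ e.2 ≠ e'.2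

instance {I J : Type} [DecidableEq I] [DecidableEq J] (M : Finset (I × J)) :
    Decidable (IsMatching M) := by unfold IsMatching; infer_instance

/-- Maximum total weight of a matching in the induced bipartite subgraph on `A` and `B`. -/
def OPT {I J : Type} [DecidableEq I] [DecidableEq J] (w : I × J → ℝ)
    (A : Finset I) (B : Finset J) : ℝ :=
  ((A ×ˢ B).powerset.filter (fun M => IsMatching M)).sup'
    ⟨∅, Finset.mem_filter.mpr ⟨Finset.empty_mem_powerset _, fun e he => by simp at he⟩⟩ (fun M => ∑ e ∈ M, w e)


open MeasureTheory ProbabilityTheory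

lemma OPT_nonneg {I J : Type} [DecidableEq I] [DecidableEq J] (w : I × J → ℝ)
    (A : Finset I) (B : Finset J) : 0 ≤ OPT w A B := by
  have h0 : (∅ : Finset (I × J)) ∈ (A ×ˢ B).powerset.filter (fun M => IsMatching M) := by
    exact Finset.mem_filter.mpr ⟨Finset.empty_mem_powerset _, fun e he => by simp at he⟩
  calc (0:ℝ) = ∑ e ∈ (∅ : Finset (I × J)), w e := by simp
    _ ≤ OPT w A B := Finset.le_sup' (fun M => ∑ e ∈ M, w e) h0

lemma OPT_le {I J : Type} [Fintype I] [Fintype J] [DecidableEq I] [DecidableEq J]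
    (w : I × J → ℝ) (hw : ∀ e, 0 ≤ w e) (A : Finset I) (B : Finset J) :
    OPT w A B ≤ ∑ e : I × J, w e := by
  apply Finset.sup'_le
  intro M hM
  exact Finset.sum_le_sum_of_subset_of_nonneg (Finset.subset_univ M)
    (fun e _ _ => hw e)

/-- If each `i ∈ I` lies in the random subset `I'` with probability `c1`, each `j ∈ J` lies in
the independently chosen random subset `J'` with probability `c2`, then the expected weight of
a maximum-weight matching of the induced subgraph on `(I', J')` is at least `c1·c2` times the
maximum matching weight of the whole graph. -/
theorem expected_random_subgraph_opt (I J : Type) [Fintype I] [Fintype J]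
    [DecidableEq I] [DecidableEq J]
    (w : I × J → ℝ) (hw : ∀ e, 0 ≤ w e)
    (Ω : Type) [MeasurableSpace Ω] (μ : Measure Ω) [IsProbabilityMeasure μ]
    [MeasurableSpace (Finset I)] [MeasurableSingletonClass (Finset I)]
    [MeasurableSpace (Finset J)] [MeasurableSingletonClass (Finset J)]
    (I' : Ω → Finset I) (J' : Ω → Finset J) (hI' : Measurable I') (hJ' : Measurable J')
    (hIndep : IndepFun I' J' μ) (c1 c2 : ℝ)
    (hc1 : ∀ i : I, (μ {ω | i ∈ I' ω}).toReal = c1)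
    (hc2 : ∀ j : J, (μ {ω | j ∈ J' ω}).toReal = c2) :
    (∫ ω, OPT w (I' ω) (J' ω) ∂μ) ≥ c1 * c2 * OPT w Finset.univ Finset.univ := by
  classical
  -- choose an optimal matching M
  obtain ⟨M, hMmem, hMeq⟩ := Finset.exists_mem_eq_sup'
    (⟨∅, by simp [IsMatching]⟩ : (((Finset.univ ×ˢ Finset.univ : Finset (I × J)).powerset.filter
      (fun M => IsMatching M))).Nonempty) (fun M => ∑ e ∈ M, w e)
  have hMmatch : IsMatching M := (Finset.mem_filter.mp hMmem).2
  have hOPTeq : OPT w (Finset.univ : Finset I) (Finset.univ : Finset J) = ∑ e ∈ M, w e := hMeq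
  -- measurable events
  have hmeasI : ∀ i : I, MeasurableSet {ω | i ∈ I' ω} :=
    fun i => hI' ((Set.to_countable {S : Finset I | i ∈ S}).measurableSet)
  have hmeasJ : ∀ j : J, MeasurableSet {ω | j ∈ J' ω} :=
    fun j => hJ' ((Set.to_countable {S : Finset J | j ∈ S}).measurableSet)
  have hmeasE : ∀ e : I × J, MeasurableSet ({ω | e.1 ∈ I' ω} ∩ {ω | e.2 ∈ J' ω}) :=
    fun e => (hmeasI e.1).inter (hmeasJ e.2)
  -- the lower-bound random variable
  set f : Ω → ℝ := fun ω => ∑ e ∈ M,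
    ({ω | e.1 ∈ I' ω} ∩ {ω | e.2 ∈ J' ω}).indicator (fun _ => w e) ω with hfdef
  -- pointwise bound f ≤ OPT
  have hpt : ∀ ω, f ω ≤ OPT w (I' ω) (J' ω) := by
    intro ω
    have hfω : f ω = ∑ e ∈ M.filter (fun e => e.1 ∈ I' ω ∧ e.2 ∈ J' ω), w e := by
      rw [Finset.sum_filter]
      refine Finset.sum_congr rfl fun e _ => ?_
      by_cases h : e.1 ∈ I' ω ∧ e.2 ∈ J' ω <;>
        simp [Set.indicator_apply, Set.mem_inter_iff, Set.mem_setOf_eq, h]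
    rw [hfω]
    unfold OPT
    apply Finset.le_sup' (f := fun M => ∑ e ∈ M, w e)
    rw [Finset.mem_filter, Finset.mem_powerset]
    constructor
    · intro e he
      rw [Finset.mem_filter] at he
      exact Finset.mem_product.mpr ⟨he.2.1, he.2.2⟩
    · intro e he e' he' hne
      exact hMmatch e (Finset.mem_filter.mp he).1 e' (Finset.mem_filter.mp he').1 hne
  -- integrability
  have hgmeas : Measurable (fun ω => OPT w (I' ω) (J' ω)) := by
    have h1 : Measurable (fun p : Finset I × Finset J => OPT w p.1 p.2) :=
      measurable_of_countable _
    have h3 := h1.comp (hI'.prodMk hJ')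
    exact h3
  have hgint : Integrable (fun ω => OPT w (I' ω) (J' ω)) μ := by
    refine ⟨hgmeas.aestronglyMeasurable, ?_⟩
    apply HasFiniteIntegral.of_bounded (C := ∑ e : I × J, w e)
    filter_upwards with ω
    rw [Real.norm_eq_abs, abs_of_nonneg (OPT_nonneg w _ _)]
    exact OPT_le w hw _ _
  have hterm_int : ∀ e ∈ M, Integrable
      (fun ω => ({ω | e.1 ∈ I' ω} ∩ {ω | e.2 ∈ J' ω}).indicator (fun _ => w e) ω) μ :=
    fun e _ => (integrable_const (w e)).indicator (hmeasE e)
  have hfint : Integrable f μ := by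
    rw [hfdef]
    exact integrable_finset_sum M hterm_int
  -- compute ∫ f
  have hint_f : ∫ ω, f ω ∂μ = c1 * c2 * ∑ e ∈ M, w e := by
    rw [hfdef]
    rw [integral_finset_sum M hterm_int]
    have : ∀ e ∈ M, ∫ ω, ({ω | e.1 ∈ I' ω} ∩ {ω | e.2 ∈ J' ω}).indicator (fun _ => w e) ω ∂μ
        = c1 * c2 * w e := by
      intro e _
      rw [integral_indicator_const _ (hmeasE e)]
      have hpre : {ω | e.1 ∈ I' ω} ∩ {ω | e.2 ∈ J' ω}
          = I' ⁻¹' {S : Finset I | e.1 ∈ S} ∩ J' ⁻¹' {T : Finset J | e.2 ∈ T} := rfl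
      have hmul : μ ({ω | e.1 ∈ I' ω} ∩ {ω | e.2 ∈ J' ω})
          = μ {ω | e.1 ∈ I' ω} * μ {ω | e.2 ∈ J' ω} := by
        rw [hpre]
        exact hIndep.measure_inter_preimage_eq_mul _ _
          ((Set.to_countable _).measurableSet) ((Set.to_countable _).measurableSet)
      rw [measureReal_def, hmul, ENNReal.toReal_mul, hc1, hc2]
      simp [smul_eq_mul]
    rw [Finset.sum_congr rfl this, ← Finset.mul_sum]
  calc c1 * c2 * OPT w Finset.univ Finset.univ = ∫ ω, f ω ∂μ := by rw [hint_f, hOPTeq]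
    _ ≤ ∫ ω, OPT w (I' ω) (J' ω) ∂μ := integral_mono hfint hgint hpt
end

section
/- Let I, J be finite sets with |I| = n ≥ 1, |J| = m ≥ 1, w : I × J → ℝ≥0, and OPT the maximum matching weight. If I_{t+1} is a uniformly random subset of I of size t+1, J_s is an independently chosen uniformly random subset of J of size s, and i is a uniformly random element of I_{t+1}, then the expected weight contributed by i in a fixed maximum-weight matching of (I_{t+1}, J_s) is at least (1/n)·(s/m)·OPT. -/
lemma card_filter_mem_powersetCard {α : Type*} [DecidableEq α] (s : Finset α) (x : α)
    (hx : x ∈ s) (k : ℕ) :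
    ((s.powersetCard (k+1)).filter (fun A => x ∈ A)).card = (s.card - 1).choose k := by
  have h1 : ((s.erase x).powersetCard k).card = (s.card - 1).choose k := by
    rw [Finset.card_powersetCard, Finset.card_erase_of_mem hx]
  rw [← h1]
  apply Finset.card_bij (fun A _ => A.erase x)
  · intro A hA
    simp only [Finset.mem_filter, Finset.mem_powersetCard] at hA
    exact Finset.mem_powersetCard.2 ⟨Finset.erase_subset_erase _ hA.1.1,
      by rw [Finset.card_erase_of_mem hA.2, hA.1.2]; rfl⟩
  · intro A hA B hB h
    simp only [Finset.mem_filter] at hA hB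
    rw [← Finset.insert_erase hA.2, ← Finset.insert_erase hB.2, h]
  · intro B hB
    rw [Finset.mem_powersetCard] at hB
    have hxB : x ∉ B := fun h => (Finset.mem_erase.1 (hB.1 h)).1 rfl
    refine ⟨insert x B, ?_, Finset.erase_insert hxB⟩
    simp only [Finset.mem_filter, Finset.mem_powersetCard]
    exact ⟨⟨Finset.insert_subset hx (hB.1.trans (Finset.erase_subset _ _)),
      by rw [Finset.card_insert_of_notMem hxB, hB.2]⟩, Finset.mem_insert_self _ _⟩


/-- If `I_{t+1}` is a uniformly random `(t+1)`-subset of `I`, `J_s` an independently chosen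
uniformly random `s`-subset of `J`, and `i` a uniformly random element of `I_{t+1}`, then the
expected weight contributed by `i` in a fixed maximum-weight matching `Mstar I_{t+1} J_s` is
at least `(1/n)·(s/m)·OPT(I, J)`. -/
theorem expected_bidder_contribution (I J : Type) [Fintype I] [Fintype J]
    [DecidableEq I] [DecidableEq J]
    (w : I × J → ℝ) (hw : ∀ e, 0 ≤ w e)
    (n m t s : ℕ) (hn : Fintype.card I = n) (hm : Fintype.card J = m)
    (hn1 : 1 ≤ n) (hm1 : 1 ≤ m) (ht : t + 1 ≤ n) (hs : s ≤ m)
    (Mstar : Finset I → Finset J → Finset (I × J))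
    (hMstar : ∀ A B, IsMatching (Mstar A B) ∧ Mstar A B ⊆ A ×ˢ B ∧
      (∑ e ∈ Mstar A B, w e) = OPT w A B) :
    (∑ A ∈ Finset.univ.powersetCard (t + 1), ∑ B ∈ Finset.univ.powersetCard s,
        (∑ i ∈ A, ∑ e ∈ (Mstar A B).filter (fun e => e.1 = i), w e) / ((t : ℝ) + 1)) /
        ((n.choose (t + 1) : ℝ) * (m.choose s : ℝ)) ≥
      (1 / (n : ℝ)) * ((s : ℝ) / (m : ℝ)) * OPT w Finset.univ Finset.univ := by
  classical
  have hCn : 0 < (n.choose (t+1) : ℝ) := by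
    exact_mod_cast Nat.choose_pos ht
  have hCm : 0 < (m.choose s : ℝ) := by
    exact_mod_cast Nat.choose_pos hs
  -- the inner double sum equals OPT w A B
  have hinner : ∀ A B, (∑ i ∈ A, ∑ e ∈ (Mstar A B).filter (fun e => e.1 = i), w e)
      = OPT w A B := by
    intro A B
    obtain ⟨_, hsub, hsum⟩ := hMstar A B
    rw [← hsum]
    exact Finset.sum_fiberwise_of_maps_to (fun e he => (Finset.mem_product.1 (hsub he)).1) w
  rcases Nat.eq_zero_or_pos s with hs0 | hs0
  · -- trivial case s = 0
    subst hs0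
    have h0 : (1 / (n : ℝ)) * (((0:ℕ) : ℝ) / (m : ℝ)) * OPT w Finset.univ Finset.univ = 0 := by
      norm_num
    rw [h0]
    apply div_nonneg _ (by positivity)
    apply Finset.sum_nonneg; intro A _
    apply Finset.sum_nonneg; intro B _
    apply div_nonneg _ (by positivity)
    apply Finset.sum_nonneg; intro i _
    exact Finset.sum_nonneg (fun e _ => hw e)
  obtain ⟨s', rfl⟩ := Nat.exists_eq_succ_of_ne_zero (Nat.pos_iff_ne_zero.mp hs0)
  obtain ⟨hM0match, hM0sub, hM0sum⟩ := hMstar Finset.univ Finset.univ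
  set M0 := Mstar Finset.univ Finset.univ with hM0
  set OPTtot := OPT w Finset.univ Finset.univ with hOPTtot
  have hOPT0 : 0 ≤ OPTtot := by
    rw [← hM0sum]; exact Finset.sum_nonneg fun e _ => hw e
  set 𝒜 := (Finset.univ : Finset I).powersetCard (t+1) with h𝒜
  set ℬ := (Finset.univ : Finset J).powersetCard (s'+1) with hℬ
  have hcA : ∀ x : I, ((𝒜.filter (fun A => x ∈ A)).card = (n-1).choose t) := by
    intro x
    have := card_filter_mem_powersetCard (Finset.univ : Finset I) x (Finset.mem_univ x) t
    rwa [Finset.card_univ, hn] at this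
  have hcB : ∀ y : J, ((ℬ.filter (fun B => y ∈ B)).card = (m-1).choose s') := by
    intro y
    have := card_filter_mem_powersetCard (Finset.univ : Finset J) y (Finset.mem_univ y) s'
    rwa [Finset.card_univ, hm] at this
  -- restriction of M0 gives a lower bound on OPT w A B
  have key : ∀ A B, (∑ e ∈ M0.filter (fun e => e.1 ∈ A ∧ e.2 ∈ B), w e) ≤ OPT w A B := by
    intro A B
    have hmem : M0.filter (fun e => e.1 ∈ A ∧ e.2 ∈ B)
        ∈ ((A ×ˢ B).powerset.filter (fun M => IsMatching M)) := by
      rw [Finset.mem_filter, Finset.mem_powerset]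
      constructor
      · intro e he; rw [Finset.mem_filter] at he; exact Finset.mem_product.2 he.2
      · intro e he e' he' hne
        exact hM0match e (Finset.filter_subset _ _ he) e' (Finset.filter_subset _ _ he') hne
    exact Finset.le_sup' (fun M => ∑ e ∈ M, w e) hmem
  -- the double-sum of restricted weights
  have hsum2 : (∑ A ∈ 𝒜, ∑ B ∈ ℬ, ∑ e ∈ M0.filter (fun e => e.1 ∈ A ∧ e.2 ∈ B), w e)
      = ((n-1).choose t : ℝ) * ((m-1).choose s' : ℝ) * OPTtot := by
    have he : ∀ e : I × J, (∑ A ∈ 𝒜, ∑ B ∈ ℬ, (if e.1 ∈ A ∧ e.2 ∈ B then w e else 0))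
        = ((n-1).choose t : ℝ) * ((m-1).choose s' : ℝ) * w e := by
      intro e
      have h1 : ∀ A : Finset I, (∑ B ∈ ℬ, (if e.1 ∈ A ∧ e.2 ∈ B then w e else 0))
          = if e.1 ∈ A then ((m-1).choose s' : ℝ) * w e else 0 := by
        intro A
        by_cases h : e.1 ∈ A
        · simp only [h, true_and, if_true]
          rw [← Finset.sum_filter, Finset.sum_const, hcB e.2, nsmul_eq_mul]
        · simp [h]
      rw [Finset.sum_congr rfl (fun A _ => h1 A), ← Finset.sum_filter, Finset.sum_const,
        hcA e.1, nsmul_eq_mul]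
      ring
    calc (∑ A ∈ 𝒜, ∑ B ∈ ℬ, ∑ e ∈ M0.filter (fun e => e.1 ∈ A ∧ e.2 ∈ B), w e)
        = ∑ A ∈ 𝒜, ∑ B ∈ ℬ, ∑ e ∈ M0, (if e.1 ∈ A ∧ e.2 ∈ B then w e else 0) := by
          simp_rw [Finset.sum_filter]
      _ = ∑ e ∈ M0, ∑ A ∈ 𝒜, ∑ B ∈ ℬ, (if e.1 ∈ A ∧ e.2 ∈ B then w e else 0) := by
          rw [show (∑ A ∈ 𝒜, ∑ B ∈ ℬ, ∑ e ∈ M0, (if e.1 ∈ A ∧ e.2 ∈ B then w e else 0))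
              = ∑ A ∈ 𝒜, ∑ e ∈ M0, ∑ B ∈ ℬ, (if e.1 ∈ A ∧ e.2 ∈ B then w e else 0) from
            Finset.sum_congr rfl (fun A _ => Finset.sum_comm)]
          exact Finset.sum_comm
      _ = ∑ e ∈ M0, ((n-1).choose t : ℝ) * ((m-1).choose s' : ℝ) * w e :=
          Finset.sum_congr rfl (fun e _ => he e)
      _ = ((n-1).choose t : ℝ) * ((m-1).choose s' : ℝ) * OPTtot := by
          rw [← Finset.mul_sum, hM0sum]
  have hstep : ((n-1).choose t : ℝ) * ((m-1).choose s' : ℝ) * OPTtot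
      ≤ ∑ A ∈ 𝒜, ∑ B ∈ ℬ, OPT w A B := by
    rw [← hsum2]
    exact Finset.sum_le_sum fun A _ => Finset.sum_le_sum fun B _ => key A B
  -- rewrite the left-hand side
  have hL : (∑ A ∈ 𝒜, ∑ B ∈ ℬ,
      (∑ i ∈ A, ∑ e ∈ (Mstar A B).filter (fun e => e.1 = i), w e) / ((t : ℝ) + 1))
      = (∑ A ∈ 𝒜, ∑ B ∈ ℬ, OPT w A B) / ((t : ℝ) + 1) := by
    simp_rw [hinner, Finset.sum_div]
  rw [ge_iff_le, hL, le_div_iff₀ (by positivity), le_div_iff₀ (by positivity : (0:ℝ) < (t:ℝ)+1)]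
  have idA : (n : ℝ) * ((n-1).choose t : ℝ) = ((t:ℝ)+1) * (n.choose (t+1) : ℝ) := by
    have hA' : n * (n-1).choose t = n.choose (t+1) * (t+1) := by
      obtain ⟨n', rfl⟩ := Nat.exists_eq_succ_of_ne_zero (by omega : n ≠ 0)
      simpa using Nat.add_one_mul_choose_eq n' t
    have hc := congrArg (fun k : ℕ => (k:ℝ)) hA'
    push_cast at hc
    linarith [hc]
  have idB : (m : ℝ) * ((m-1).choose s' : ℝ) = ((s':ℝ)+1) * (m.choose (s'+1) : ℝ) := by
    have hB' : m * (m-1).choose s' = m.choose (s'+1) * (s'+1) := by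
      obtain ⟨m', rfl⟩ := Nat.exists_eq_succ_of_ne_zero (by omega : m ≠ 0)
      simpa using Nat.add_one_mul_choose_eq m' s'
    have hc := congrArg (fun k : ℕ => (k:ℝ)) hB'
    push_cast at hc
    linarith [hc]
  have hne : (n:ℝ) ≠ 0 := by positivity
  have hme : (m:ℝ) ≠ 0 := by
    have : (0:ℕ) < m := hm1
    exact ne_of_gt (by exact_mod_cast this)
  have hprod : ((n:ℝ) * ((n-1).choose t : ℝ)) * ((m:ℝ) * ((m-1).choose s' : ℝ))
      = (((t:ℝ)+1) * (n.choose (t+1) : ℝ)) * (((s':ℝ)+1) * (m.choose (s'+1) : ℝ)) := by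
    rw [idA, idB]
  refine le_trans (le_of_eq ?_) hstep
  have hsucc : ((s'.succ : ℕ) : ℝ) = ((s'+1 : ℕ) : ℝ) := by norm_num
  field_simp
  push_cast [Nat.succ_eq_add_one] at hprod ⊢
  linear_combination (-1:ℝ) * OPTtot * hprod
end

section
/- Let n ≥ 3 and k = ⌊n/e⌋. Then (k/n) · ∑_{t=k+1}^{n} 1/(t−1) ≥ 1/e − 1/n. -/
lemma log_sub_le_sum (k : ℕ) (hk : 1 ≤ k) :
    ∀ n, k ≤ n → Real.log n - Real.log k ≤ ∑ t ∈ Finset.Icc (k + 1) n, 1 / ((t : ℝ) - 1) := by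
  refine Nat.le_induction ?_ ?_
  · simp [Finset.Icc_eq_empty_of_lt (Nat.lt_succ_self k)]
  · intro n hn ih
    have hkpos : (0:ℝ) < k := by exact_mod_cast hk
    have hnpos : (0:ℝ) < n := lt_of_lt_of_le hkpos (by exact_mod_cast hn)
    rw [Finset.sum_Icc_succ_top (by omega : k + 1 ≤ n + 1)]
    have hstep : Real.log (n + 1) - Real.log n ≤ 1 / ((n:ℝ) + 1 - 1) := by
      rw [← Real.log_div (by positivity) (ne_of_gt hnpos)]
      have := Real.log_le_sub_one_of_pos (show (0:ℝ) < ((n:ℝ)+1)/n by positivity)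
      have h2 : ((n:ℝ)+1)/n - 1 = 1/n := by field_simp; ring
      rw [h2] at this
      simpa using this
    push_cast
    linarith

theorem ratio_sum_bound (n k : ℕ) (hn : 3 ≤ n) (hk : k = ⌊(n : ℝ) / Real.exp 1⌋₊) :
    ((k : ℝ) / (n : ℝ)) * (∑ t ∈ Finset.Icc (k + 1) n, 1 / ((t : ℝ) - 1)) ≥
      1 / Real.exp 1 - 1 / (n : ℝ) := by
  have he : (0:ℝ) < Real.exp 1 := Real.exp_pos 1
  have he3 : Real.exp 1 < 3 := by
    have := Real.exp_one_lt_d9; linarith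
  have hn3 : (3:ℝ) ≤ n := by exact_mod_cast hn
  have hnpos : (0:ℝ) < n := by linarith
  have hk1 : 1 ≤ k := by
    rw [hk]
    apply Nat.le_floor
    rw [Nat.cast_one, le_div_iff₀ he]
    linarith
  have hkle : (k:ℝ) ≤ (n:ℝ) / Real.exp 1 := hk ▸ Nat.floor_le (by positivity)
  have hklt : (n:ℝ) / Real.exp 1 < k + 1 := hk ▸ Nat.lt_floor_add_one _
  have hkpos : (0:ℝ) < k := by exact_mod_cast hk1
  have hkn : k ≤ n := by
    have h1 : (k:ℝ) ≤ n := le_trans hkle (by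
      rw [div_le_iff₀ he]
      nlinarith [Real.add_one_le_exp 1])
    exact_mod_cast h1
  have hsum := log_sub_le_sum k hk1 n hkn
  have hlog : 1 ≤ Real.log n - Real.log k := by
    rw [← Real.log_div (ne_of_gt hnpos) (ne_of_gt hkpos)]
    have hen : Real.exp 1 ≤ (n:ℝ) / k := by
      rw [le_div_iff₀ hkpos]
      rw [le_div_iff₀ he] at hkle
      linarith
    calc (1:ℝ) = Real.log (Real.exp 1) := (Real.log_exp 1).symm
    _ ≤ Real.log ((n:ℝ)/k) := Real.log_le_log he hen
  have hS : (1:ℝ) ≤ ∑ t ∈ Finset.Icc (k + 1) n, 1 / ((t : ℝ) - 1) := le_trans hlog hsum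
  have hfrac : 1 / Real.exp 1 - 1 / (n:ℝ) ≤ (k:ℝ) / n := by
    have heq : 1 / Real.exp 1 - 1 / (n:ℝ) = ((n:ℝ) / Real.exp 1 - 1) / n := by
      field_simp
    rw [heq]
    gcongr
    linarith
  calc 1 / Real.exp 1 - 1 / (n:ℝ) ≤ (k:ℝ)/n := hfrac
  _ = (k:ℝ)/n * 1 := by ring
  _ ≤ (k:ℝ)/n * ∑ t ∈ Finset.Icc (k + 1) n, 1 / ((t : ℝ) - 1) := by
      apply mul_le_mul_of_nonneg_left hS (by positivity)
end

section
/- Suppose for each step t with k+1 ≤ t ≤ n the expected gain E[w_t] satisfies E[w_t] ≥ (k/(n·(t−1)))·OPT, where 2 ≤ k = ⌊n/e⌋ and OPT ≥ 0. Then the total expected gain ∑_{t=k+1}^{n} E[w_t] is at least (1/e − 1/n)·OPT. -/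
lemma harm_sum (k : ℕ) (hk : 1 ≤ k) : ∀ n : ℕ, k ≤ n →
    Real.log n - Real.log k ≤ ∑ t ∈ Finset.Icc (k+1) n, 1/((t:ℝ)-1) := by
  intro n
  induction n with
  | zero => intro h; omega
  | succ n ih =>
    intro h
    rcases eq_or_lt_of_le h with heq | hlt
    · subst heq
      rw [Finset.Icc_eq_empty (by omega), Finset.sum_empty, sub_self]
    · have hkn : k ≤ n := by omega
      rw [Finset.sum_Icc_succ_top (by omega)]
      have hn0 : (0:ℝ) < (n:ℝ) := by
        have : 1 ≤ n := by omega
        exact_mod_cast Nat.lt_of_lt_of_le Nat.zero_lt_one this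
      have hlog : Real.log (n+1) - Real.log n ≤ 1/(n:ℝ) := by
        rw [← Real.log_div (by positivity) (by positivity)]
        have := Real.log_le_sub_one_of_pos (x := ((n:ℝ)+1)/n) (by positivity)
        calc Real.log (((n:ℝ)+1)/n) ≤ ((n:ℝ)+1)/n - 1 := this
          _ = 1/(n:ℝ) := by field_simp; ring
      have hih := ih hkn
      push_cast
      have heq2 : ((n:ℝ) + 1 - 1) = n := by ring
      rw [heq2]
      push_cast at hlog
      calc Real.log ((n:ℝ)+1) - Real.log k
          = (Real.log ((n:ℝ)+1) - Real.log n) + (Real.log n - Real.log k) := by ring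
        _ ≤ (∑ t ∈ Finset.Icc (k+1) n, 1/((t:ℝ)-1)) + 1/(n:ℝ) := by
            linarith
        _ = _ := by ring

theorem total_expected_gain (n k : ℕ) (hn : 3 ≤ n) (hk : k = ⌊(n : ℝ) / Real.exp 1⌋₊)
    (hk2 : 2 ≤ k) (OPT : ℝ) (hOPT : 0 ≤ OPT) (E : ℕ → ℝ)
    (hE : ∀ t ∈ Finset.Icc (k + 1) n, E t ≥ (k : ℝ) / ((n : ℝ) * ((t : ℝ) - 1)) * OPT) :
    (∑ t ∈ Finset.Icc (k + 1) n, E t) ≥ (1 / Real.exp 1 - 1 / (n : ℝ)) * OPT := by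
  have hn0 : (0:ℝ) < n := by exact_mod_cast (by omega : 0 < n)
  have hk0 : (0:ℝ) < k := by exact_mod_cast (by omega : 0 < k)
  have he : (0:ℝ) < Real.exp 1 := Real.exp_pos 1
  -- k ≤ n/e
  have hkle : (k:ℝ) ≤ (n:ℝ) / Real.exp 1 := by
    rw [hk]; exact Nat.floor_le (by positivity)
  have hkn : k ≤ n := by
    have : (k:ℝ) ≤ n := le_trans hkle (by
      rw [div_le_iff₀ he]
      nlinarith [Real.add_one_le_exp (1:ℝ)])
    exact_mod_cast this
  -- step 1: sum ≥ sum of bounds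
  have h1 : (∑ t ∈ Finset.Icc (k + 1) n, E t) ≥
      ∑ t ∈ Finset.Icc (k + 1) n, (k : ℝ) / ((n : ℝ) * ((t : ℝ) - 1)) * OPT :=
    Finset.sum_le_sum hE
  -- rewrite bound sum
  have h2 : ∑ t ∈ Finset.Icc (k + 1) n, (k : ℝ) / ((n : ℝ) * ((t : ℝ) - 1)) * OPT
      = ((k:ℝ)/n) * (∑ t ∈ Finset.Icc (k+1) n, 1/((t:ℝ)-1)) * OPT := by
    rw [Finset.mul_sum, ← Finset.sum_mul]
    congr 1
    apply Finset.sum_congr rfl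
    intro t ht
    have ht1 : k + 1 ≤ t := (Finset.mem_Icc.mp ht).1
    have htpos : (0:ℝ) < (t:ℝ) - 1 := by
      have : (3:ℝ) ≤ t := by exact_mod_cast (by omega : 3 ≤ t)
      linarith
    field_simp
  -- the harmonic sum is ≥ 1
  have hS : (1:ℝ) ≤ ∑ t ∈ Finset.Icc (k+1) n, 1/((t:ℝ)-1) := by
    have hh := harm_sum k (by omega) n hkn
    have hlog1 : (1:ℝ) ≤ Real.log n - Real.log k := by
      have : Real.exp 1 * k ≤ n := by
        rw [le_div_iff₀ he] at hkle
        linarith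
      have h2 : Real.log (Real.exp 1 * k) ≤ Real.log n :=
        Real.log_le_log (by positivity) this
      rw [Real.log_mul (ne_of_gt he) (ne_of_gt hk0), Real.log_exp] at h2
      linarith
    linarith
  -- k/n ≥ 1/e - 1/n
  have hkn2 : (1/Real.exp 1 - 1/(n:ℝ)) ≤ (k:ℝ)/n := by
    have h3 : (n:ℝ)/Real.exp 1 < (k:ℝ) + 1 := by
      rw [hk]; exact Nat.lt_floor_add_one _
    rw [div_lt_iff₀ he] at h3
    rw [div_sub_div _ _ (ne_of_gt he) (ne_of_gt hn0), div_le_div_iff₀ (by positivity) hn0]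
    nlinarith
  calc (∑ t ∈ Finset.Icc (k + 1) n, E t)
      ≥ ((k:ℝ)/n) * (∑ t ∈ Finset.Icc (k+1) n, 1/((t:ℝ)-1)) * OPT := by rw [← h2]; exact h1
    _ ≥ ((k:ℝ)/n) * 1 * OPT := by
        apply mul_le_mul_of_nonneg_right _ hOPT
        apply mul_le_mul_of_nonneg_left hS (by positivity)
    _ ≥ (1 / Real.exp 1 - 1 / (n : ℝ)) * OPT := by
        rw [mul_one]
        exact mul_le_mul_of_nonneg_right hkn2 hOPT
end
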